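/- If f : F_2^n → F_2 has the property that A(y) = −2^n never occurs for y ≠ 0 (equivalently Δ_f < 2^n or f(x+y) ≠ f(x)+1 for some x, for each y≠0), and f is balanced, then for every u ≠ 0 there exists y with ⟨y,u⟩ = 1 and W_f(y) ≠ 0; consequently P_0 − P_u > 0 strictly for all u ≠ 0. -/
import Mathlib


open Finset

/-- Inner product over F_2. -/
def ip {n : ℕ} (x y : Fin n → ZMod 2) : ZMod 2 := ∑ i, x i * y i

/-- (-1)^s for s ∈ F_2, as a rational number. -/
def sgn (s : ZMod 2) : ℚ := (-1) ^ s.val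

/-- Walsh transform of f at y. -/
def walsh {n : ℕ} (f : (Fin n → ZMod 2) → ZMod 2) (y : Fin n → ZMod 2) : ℚ :=
  ∑ z, sgn (f z + ip z y)

/-- Autocorrelation coefficient of f at y. -/
def acorr {n : ℕ} (f : (Fin n → ZMod 2) → ZMod 2) (y : Fin n → ZMod 2) : ℚ :=
  ∑ x, sgn (f x + f (x + y))

/-- P_u : probability that f(u₁)+f(u₂)+f(u₃)+f(u₄)=0 when u₁+u₂+u₃+u₄ = u,
with (u₁,u₂,u₃) uniform in (F_2^n)^3 and u₄ = u + u₁ + u₂ + u₃. -/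
def probP {n : ℕ} (f : (Fin n → ZMod 2) → ZMod 2) (u : Fin n → ZMod 2) : ℚ :=
  ((univ.filter (fun t : (Fin n → ZMod 2) × (Fin n → ZMod 2) × (Fin n → ZMod 2) =>
      f t.1 + f t.2.1 + f t.2.2 + f (t.1 + t.2.1 + t.2.2 + u) = 0)).card : ℚ) / 2 ^ (3 * n)

/-- f is balanced: it takes the value 0 on exactly 2^(n-1) inputs. -/
def IsBalancedBF {n : ℕ} (f : (Fin n → ZMod 2) → ZMod 2) : Prop :=
  (univ.filter (fun x : Fin n → ZMod 2 => f x = 0)).card = 2 ^ (n - 1)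

lemma zmod2_cases (s : ZMod 2) : s = 0 ∨ s = 1 := by revert s; decide
lemma v0 : ZMod.val (0 : ZMod 2) = 0 := rfl
lemma v1 : ZMod.val (1 : ZMod 2) = 1 := rfl
lemma sgn_zero : sgn 0 = 1 := rfl
lemma sgn_one : sgn 1 = -1 := rfl
lemma sgn_add (a b : ZMod 2) : sgn (a + b) = sgn a * sgn b := by
  rcases zmod2_cases a with ha | ha <;> rcases zmod2_cases b with hb | hb <;>
    subst ha <;> subst hb <;> norm_num [sgn, v0, v1] <;> rfl
lemma sgn_eq_ind (s : ZMod 2) : sgn s = 2 * (if s = 0 then (1:ℚ) else 0) - 1 := by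
  rcases zmod2_cases s with h | h <;> subst h <;> norm_num [sgn, v0, v1]
lemma sgn_cases (s : ZMod 2) : sgn s = 1 ∨ sgn s = -1 := by
  rcases zmod2_cases s with h | h <;> subst h <;> simp [sgn_zero, sgn_one]
lemma ip_comm {n : ℕ} (x y : Fin n → ZMod 2) : ip x y = ip y x := by
  simp [ip, mul_comm]
lemma ip_add_right {n : ℕ} (x a b : Fin n → ZMod 2) : ip x (a + b) = ip x a + ip x b := by
  simp [ip, mul_add, Finset.sum_add_distrib]
lemma ip_add_left {n : ℕ} (a b x : Fin n → ZMod 2) : ip (a + b) x = ip a x + ip b x := by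
  simp [ip, add_mul, Finset.sum_add_distrib]
lemma ip_zero_right {n : ℕ} (x : Fin n → ZMod 2) : ip x 0 = 0 := by simp [ip]

lemma sum_sgn_ip {n : ℕ} (a : Fin n → ZMod 2) :
    ∑ z : Fin n → ZMod 2, sgn (ip z a) = if a = 0 then (2:ℚ) ^ n else 0 := by
  by_cases h : a = 0
  · simp [h, ip_zero_right, sgn_zero, Finset.card_univ, Fintype.card_fun]
  · simp only [h, if_false]
    obtain ⟨i, hi⟩ : ∃ i, a i ≠ 0 := by
      by_contra hc; push_neg at hc; exact h (funext hc)
    have hai : a i = 1 := (zmod2_cases (a i)).resolve_left hi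
    set e : Fin n → ZMod 2 := Pi.single i 1 with he
    have hipe : ip e a = 1 := by
      rw [ip]
      rw [Finset.sum_eq_single i]
      · simp [he, hai]
      · intro j _ hj; simp [he, Pi.single_eq_of_ne hj]
      · simp
    have key : ∀ z, sgn (ip (z + e) a) = - sgn (ip z a) := by
      intro z
      rw [ip_add_left, sgn_add, hipe, sgn_one]; ring
    have hsum : ∑ z : Fin n → ZMod 2, sgn (ip (z + e) a)
        = ∑ z : Fin n → ZMod 2, sgn (ip z a) :=
      Equiv.sum_comp (Equiv.addRight e) (fun w => sgn (ip w a))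
    simp only [key] at hsum
    rw [Finset.sum_neg_distrib] at hsum
    linarith
lemma vadd_self {n : ℕ} (v : Fin n → ZMod 2) : v + v = 0 := by
  funext i; exact CharTwo.add_self_eq_zero _

lemma eq_iff_add_eq_zero {n : ℕ} (a b : Fin n → ZMod 2) : a + b = 0 ↔ b = a := by
  constructor
  · intro h
    have h2 : a + (a + b) = a + 0 := by rw [h]
    simpa [← add_assoc, vadd_self] using h2
  · rintro rfl; exact vadd_self _

lemma walsh_sq_sum {n : ℕ} (f : (Fin n → ZMod 2) → ZMod 2) (u : Fin n → ZMod 2) :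
    ∑ y : Fin n → ZMod 2, sgn (ip y u) * walsh f y ^ 2 = 2 ^ n * acorr f u := by
  have step1 : ∀ y : Fin n → ZMod 2, sgn (ip y u) * walsh f y ^ 2 =
      ∑ t : (Fin n → ZMod 2) × (Fin n → ZMod 2),
        sgn (f t.1 + f t.2) * sgn (ip y (u + t.1 + t.2)) := by
    intro y
    rw [walsh, sq, Finset.sum_mul_sum, Fintype.sum_prod_type]
    simp only [Finset.mul_sum]
    refine Finset.sum_congr rfl fun a _ => Finset.sum_congr rfl fun b _ => ?_
    rw [show u + a + b = u + (a + b) by ring, ip_add_right, ip_add_right]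
    simp only [sgn_add, ip_comm y a, ip_comm y b]
    ring
  calc ∑ y : Fin n → ZMod 2, sgn (ip y u) * walsh f y ^ 2
      = ∑ y : Fin n → ZMod 2, ∑ t : (Fin n → ZMod 2) × (Fin n → ZMod 2),
          sgn (f t.1 + f t.2) * sgn (ip y (u + t.1 + t.2)) := by
        exact Finset.sum_congr rfl fun y _ => step1 y
    _ = ∑ t : (Fin n → ZMod 2) × (Fin n → ZMod 2),
          sgn (f t.1 + f t.2) * ∑ y : Fin n → ZMod 2, sgn (ip y (u + t.1 + t.2)) := by
        rw [Finset.sum_comm]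
        exact Finset.sum_congr rfl fun t _ => (Finset.mul_sum _ _ _).symm
    _ = ∑ t : (Fin n → ZMod 2) × (Fin n → ZMod 2),
          sgn (f t.1 + f t.2) * (if t.2 = u + t.1 then (2:ℚ)^n else 0) := by
        refine Finset.sum_congr rfl fun t _ => ?_
        rw [sum_sgn_ip]
        congr 1
        rw [show u + t.1 + t.2 = (u + t.1) + t.2 by ring]
        simp [eq_iff_add_eq_zero]
    _ = ∑ a : Fin n → ZMod 2, sgn (f a + f (u + a)) * (2:ℚ)^n := by
        rw [Fintype.sum_prod_type]
        refine Finset.sum_congr rfl fun a _ => ?_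
        have h1 : ∀ b : Fin n → ZMod 2, sgn (f a + f b) * (if b = u + a then (2:ℚ)^n else 0)
            = if b = u + a then sgn (f a + f b) * 2 ^ n else 0 := fun b => by split <;> simp
        rw [Finset.sum_congr rfl fun b _ => h1 b, Finset.sum_ite_eq' univ (u + a)]
        simp
    _ = 2 ^ n * acorr f u := by
        rw [← Finset.sum_mul, mul_comm, acorr]
        congr 1
        exact Finset.sum_congr rfl fun a _ => by rw [add_comm u a]
lemma walsh_pow4_sum {n : ℕ} (f : (Fin n → ZMod 2) → ZMod 2) (u : Fin n → ZMod 2) :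
    ∑ y : Fin n → ZMod 2, sgn (ip y u) * walsh f y ^ 4
      = 2 ^ n * ∑ t : (Fin n → ZMod 2) × (Fin n → ZMod 2) × (Fin n → ZMod 2),
          sgn (f t.1 + f t.2.1 + f t.2.2 + f (t.1 + t.2.1 + t.2.2 + u)) := by
  have step1 : ∀ y : Fin n → ZMod 2, sgn (ip y u) * walsh f y ^ 4 =
      ∑ q : (Fin n → ZMod 2) × (Fin n → ZMod 2) × (Fin n → ZMod 2) × (Fin n → ZMod 2),
        sgn (f q.1 + f q.2.1 + f q.2.2.1 + f q.2.2.2)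
          * sgn (ip y (u + q.1 + q.2.1 + q.2.2.1 + q.2.2.2)) := by
    intro y
    rw [walsh]
    simp only [pow_succ, pow_zero, one_mul, Finset.sum_mul, Finset.mul_sum,
      Fintype.sum_prod_type]
    refine Finset.sum_congr rfl fun a _ => Finset.sum_congr rfl fun b _ =>
      Finset.sum_congr rfl fun c _ => Finset.sum_congr rfl fun d _ => ?_
    simp only [ip_add_right, sgn_add, ip_comm y a, ip_comm y b, ip_comm y c, ip_comm y d]
    ring
  calc ∑ y : Fin n → ZMod 2, sgn (ip y u) * walsh f y ^ 4
      = ∑ q : (Fin n → ZMod 2) × (Fin n → ZMod 2) × (Fin n → ZMod 2) × (Fin n → ZMod 2),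
          sgn (f q.1 + f q.2.1 + f q.2.2.1 + f q.2.2.2)
            * ∑ y : Fin n → ZMod 2, sgn (ip y (u + q.1 + q.2.1 + q.2.2.1 + q.2.2.2)) := by
        rw [Finset.sum_congr rfl fun y _ => step1 y, Finset.sum_comm]
        exact Finset.sum_congr rfl fun q _ => (Finset.mul_sum _ _ _).symm
    _ = ∑ q : (Fin n → ZMod 2) × (Fin n → ZMod 2) × (Fin n → ZMod 2) × (Fin n → ZMod 2),
          sgn (f q.1 + f q.2.1 + f q.2.2.1 + f q.2.2.2)
            * (if q.2.2.2 = u + q.1 + q.2.1 + q.2.2.1 then (2:ℚ)^n else 0) := by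
        refine Finset.sum_congr rfl fun q _ => ?_
        rw [sum_sgn_ip]
        congr 1
        simp [eq_iff_add_eq_zero]
    _ = ∑ t : (Fin n → ZMod 2) × (Fin n → ZMod 2) × (Fin n → ZMod 2),
          sgn (f t.1 + f t.2.1 + f t.2.2 + f (u + t.1 + t.2.1 + t.2.2)) * (2:ℚ)^n := by
        simp only [Fintype.sum_prod_type]
        refine Finset.sum_congr rfl fun a _ => Finset.sum_congr rfl fun b _ =>
          Finset.sum_congr rfl fun c _ => ?_
        have h1 : ∀ d : Fin n → ZMod 2,
            sgn (f a + f b + f c + f d) * (if d = u + a + b + c then (2:ℚ)^n else 0)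
            = if d = u + a + b + c then sgn (f a + f b + f c + f d) * 2 ^ n else 0 :=
          fun d => by split <;> simp
        rw [Finset.sum_congr rfl fun d _ => h1 d, Finset.sum_ite_eq' univ (u + a + b + c)]
        simp
    _ = 2 ^ n * ∑ t : (Fin n → ZMod 2) × (Fin n → ZMod 2) × (Fin n → ZMod 2),
          sgn (f t.1 + f t.2.1 + f t.2.2 + f (t.1 + t.2.1 + t.2.2 + u)) := by
        rw [← Finset.sum_mul, mul_comm]
        congr 1
        refine Finset.sum_congr rfl fun t _ => ?_
        rw [show u + t.1 + t.2.1 + t.2.2 = t.1 + t.2.1 + t.2.2 + u by ring]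
lemma acorr_zero {n : ℕ} (f : (Fin n → ZMod 2) → ZMod 2) : acorr f 0 = 2 ^ n := by
  have : ∀ x : Fin n → ZMod 2, f x + f (x + 0) = 0 := by
    intro x; rw [add_zero]; exact CharTwo.add_self_eq_zero _
  rw [acorr, Finset.sum_congr rfl fun x _ => by rw [this x, sgn_zero]]
  simp [Finset.card_univ, Fintype.card_fun]

lemma probP_eq {n : ℕ} (f : (Fin n → ZMod 2) → ZMod 2) (u : Fin n → ZMod 2) :
    probP f u = ((∑ t : (Fin n → ZMod 2) × (Fin n → ZMod 2) × (Fin n → ZMod 2),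
        sgn (f t.1 + f t.2.1 + f t.2.2 + f (t.1 + t.2.1 + t.2.2 + u))) + 2 ^ (3 * n))
      / (2 * 2 ^ (3 * n)) := by
  have h1 : ∑ t : (Fin n → ZMod 2) × (Fin n → ZMod 2) × (Fin n → ZMod 2),
      sgn (f t.1 + f t.2.1 + f t.2.2 + f (t.1 + t.2.1 + t.2.2 + u))
      = ∑ t : (Fin n → ZMod 2) × (Fin n → ZMod 2) × (Fin n → ZMod 2),
        (2 * (if f t.1 + f t.2.1 + f t.2.2 + f (t.1 + t.2.1 + t.2.2 + u) = 0
          then (1:ℚ) else 0) - 1) :=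
    Finset.sum_congr rfl fun t _ => sgn_eq_ind _
  have hcardT : (Fintype.card ((Fin n → ZMod 2) × (Fin n → ZMod 2) × (Fin n → ZMod 2)) : ℚ)
      = 2 ^ (3 * n) := by
    simp [Fintype.card_prod, Fintype.card_fun]
    rw [show 3 * n = n + (n + n) from by ring, pow_add, pow_add]
  have h2 : ∑ t : (Fin n → ZMod 2) × (Fin n → ZMod 2) × (Fin n → ZMod 2),
      (if f t.1 + f t.2.1 + f t.2.2 + f (t.1 + t.2.1 + t.2.2 + u) = 0 then (1:ℚ) else 0)
      = ((univ.filter (fun t : (Fin n → ZMod 2) × (Fin n → ZMod 2) × (Fin n → ZMod 2) =>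
          f t.1 + f t.2.1 + f t.2.2 + f (t.1 + t.2.1 + t.2.2 + u) = 0)).card : ℚ) := by
    simp [Finset.sum_boole]
  rw [probP, h1, Finset.sum_sub_distrib, ← Finset.mul_sum, h2, Finset.sum_const,
    Finset.card_univ, nsmul_eq_mul, mul_one, hcardT]
  have hp : (0:ℚ) < 2 ^ (3 * n) := by positivity
  field_simp
  ring

set_option maxHeartbeats 1600000 in
theorem strict_gap_of_good_autocorrelation {n : ℕ} (f : (Fin n → ZMod 2) → ZMod 2)
    (hbal : walsh f 0 = 0)
    (hauto : ∀ y : Fin n → ZMod 2, y ≠ 0 → |acorr f y| < 2 ^ n) :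
    ∀ u : Fin n → ZMod 2, u ≠ 0 →
      (∃ y : Fin n → ZMod 2, ip y u = 1 ∧ walsh f y ≠ 0) ∧
      0 < probP f 0 - probP f u := by
  intro u hu
  have hA : acorr f u < 2 ^ n := lt_of_abs_lt (hauto u hu)
  have h2n : (0:ℚ) < 2 ^ n := by positivity
  -- second-moment identity
  have e0 : ∑ y : Fin n → ZMod 2, walsh f y ^ 2 = 2 ^ n * 2 ^ n := by
    have := walsh_sq_sum f 0
    simpa [ip_zero_right, sgn_zero, acorr_zero] using this
  have eu := walsh_sq_sum f u
  have h2 : ∑ y : Fin n → ZMod 2, (1 - sgn (ip y u)) * walsh f y ^ 2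
      = 2 ^ n * (2 ^ n - acorr f u) := by
    simp only [sub_mul, one_mul]
    rw [Finset.sum_sub_distrib, e0, eu]; ring
  have hpos2 : 0 < ∑ y : Fin n → ZMod 2, (1 - sgn (ip y u)) * walsh f y ^ 2 := by
    rw [h2]; apply mul_pos h2n; linarith
  -- existence
  have hex : ∃ y : Fin n → ZMod 2, ip y u = 1 ∧ walsh f y ≠ 0 := by
    by_contra hno
    push_neg at hno
    have hzero : ∀ y : Fin n → ZMod 2, (1 - sgn (ip y u)) * walsh f y ^ 2 = 0 := by
      intro y
      rcases zmod2_cases (ip y u) with h | h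
      · rw [h, sgn_zero]; ring
      · rw [hno y h]; ring
    rw [Finset.sum_congr rfl fun y _ => hzero y, Finset.sum_const, smul_zero] at hpos2
    exact lt_irrefl 0 hpos2
  obtain ⟨y₀, hy₀, hw₀⟩ := hex
  refine ⟨⟨y₀, hy₀, hw₀⟩, ?_⟩
  -- fourth-moment
  set S : (Fin n → ZMod 2) → ℚ := fun v =>
    ∑ t : (Fin n → ZMod 2) × (Fin n → ZMod 2) × (Fin n → ZMod 2),
      sgn (f t.1 + f t.2.1 + f t.2.2 + f (t.1 + t.2.1 + t.2.2 + v)) with hS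
  have e40 : ∑ y : Fin n → ZMod 2, walsh f y ^ 4 = 2 ^ n * S 0 := by
    have := walsh_pow4_sum f 0
    simpa [ip_zero_right, sgn_zero, hS] using this
  have e4u : ∑ y : Fin n → ZMod 2, sgn (ip y u) * walsh f y ^ 4 = 2 ^ n * S u :=
    walsh_pow4_sum f u
  have h4 : ∑ y : Fin n → ZMod 2, (1 - sgn (ip y u)) * walsh f y ^ 4
      = 2 ^ n * (S 0 - S u) := by
    simp only [sub_mul, one_mul]
    rw [Finset.sum_sub_distrib, e40, e4u]; ring
  have hpos4 : 0 < ∑ y : Fin n → ZMod 2, (1 - sgn (ip y u)) * walsh f y ^ 4 := by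
    apply Finset.sum_pos'
    · intro y _
      apply mul_nonneg
      · rcases sgn_cases (ip y u) with h | h <;> rw [h] <;> norm_num
      · positivity
    · refine ⟨y₀, Finset.mem_univ _, ?_⟩
      rw [hy₀, sgn_one]
      have hw4 : 0 < walsh f y₀ ^ 4 := by positivity
      linarith
  have hSS : 0 < S 0 - S u := by
    rw [h4] at hpos4
    nlinarith
  rw [probP_eq, probP_eq]
  have hp : (0:ℚ) < 2 * 2 ^ (3 * n) := by positivity
  rw [div_sub_div_same]
  apply div_pos _ hp
  simp only [hS, add_zero] at hSS
  simp only [add_zero]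
  linarith
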